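/- arXiv:2307.00465 — 4 statements merged into one kernel-verified Lean document; each statement's English description precedes it below -/
import Mathlib

section
/- Let p = softmax(z) over m outputs, y ∈ {0,1}^m a label vector, and m, n two indices with y_m = y_n = 1. After one gradient descent step on the logits with learning rate λ > 0 applied to the NLL loss L = -log(Σ_i y_i p_i), the new probabilities satisfy p'_m / p'_n = (p_m/p_n)·exp(λ(p_m - p_n)(1-p̂)/p̂), where p̂ = Σ_i y_i p_i. In particular, p'_m/p'_n > p_m/p_n if and only if p_m > p_n, and p'_m/p'_n = p_m/p_n if p_m = p_n. -/
/-!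
Softmax ratios only see differences of logits: `p_i / p_j = exp (z_i - z_j)`. For two labelled
outputs (`y = 1`) the gradient step moves `z_a - z_b` by `λ (p_a - p_b)(1 - p̂)/p̂`, so the ratio
is multiplied by the exponential of that quantity, whose sign is that of `p_a - p_b`.
-/

noncomputable def softmax {m : ℕ} (z : Fin m → ℝ) (i : Fin m) : ℝ :=
  Real.exp (z i) / ∑ k, Real.exp (z k)

section Softmax

variable {m : ℕ}

lemma sum_exp_pos (z : Fin m → ℝ) (i : Fin m) : 0 < ∑ k, Real.exp (z k) :=
  Finset.sum_pos (fun k _ => Real.exp_pos (z k)) ⟨i, Finset.mem_univ i⟩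

lemma softmax_pos (z : Fin m → ℝ) (i : Fin m) : 0 < softmax z i :=
  div_pos (Real.exp_pos _) (sum_exp_pos z i)

lemma softmax_div_softmax (z : Fin m → ℝ) (i j : Fin m) :
    softmax z i / softmax z j = Real.exp (z i - z j) := by
  rw [softmax, softmax, div_div_div_cancel_right₀ (sum_exp_pos z i).ne', Real.exp_sub]

lemma softmax_div_softmax_of_sub_eq {z z' : Fin m → ℝ} {i j : Fin m} {c : ℝ}
    (h : z' i - z' j = z i - z j + c) :
    softmax z' i / softmax z' j = softmax z i / softmax z j * Real.exp c := by
  rw [softmax_div_softmax, softmax_div_softmax, h, Real.exp_add]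

end Softmax

theorem nll_ratio_update_general {m' : ℕ} (z : Fin m' → ℝ) (y : Fin m' → ℝ)
    (lam : ℝ) (hlam : 0 < lam)
    (p : Fin m' → ℝ) (hp : p = softmax z)
    (phat : ℝ)
    (h0 : 0 < phat) (h1 : phat < 1)
    (grad : Fin m' → ℝ) (hgrad : ∀ j, grad j = (p j / phat) * (phat - y j))
    (z' : Fin m' → ℝ) (hz' : ∀ j, z' j = z j - lam * grad j)
    (p' : Fin m' → ℝ) (hp' : p' = softmax z')
    (a b : Fin m') (ha : y a = 1) (hb : y b = 1) :
    p' a / p' b = (p a / p b) * Real.exp (lam * (p a - p b) * (1 - phat) / phat) ∧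
    (p a / p b < p' a / p' b ↔ p b < p a) ∧
    (p a = p b → p' a / p' b = p a / p b) := by
  have hstep : z' a - z' b = z a - z b + lam * (p a - p b) * (1 - phat) / phat := by
    rw [hz', hz', hgrad, hgrad, ha, hb]
    ring
  have hratio : p' a / p' b = p a / p b * Real.exp (lam * (p a - p b) * (1 - phat) / phat) := by
    subst hp hp'
    exact softmax_div_softmax_of_sub_eq hstep
  have hratio_pos : 0 < p a / p b := by
    subst hp
    exact div_pos (softmax_pos z a) (softmax_pos z b)
  have hcoeff : 0 < lam * (1 - phat) / phat := div_pos (mul_pos hlam (sub_pos.2 h1)) h0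
  refine ⟨hratio, ?_, fun h => by simp [hratio, h]⟩
  rw [hratio, lt_mul_iff_one_lt_right hratio_pos, Real.one_lt_exp_iff,
    show lam * (p a - p b) * (1 - phat) / phat = lam * (1 - phat) / phat * (p a - p b) by ring,
    mul_pos_iff_of_pos_left hcoeff, sub_pos]

/-- one gradient step on the NLL loss multiplies the ratio of two allowed
probabilities by `exp (λ (p_m - p_n)(1-p̂)/p̂)`; hence the ratio increases iff
`p_m > p_n` and is preserved when `p_m = p_n`. -/
theorem nll_ratio_update {m' : ℕ} (z : Fin m' → ℝ) (y : Fin m' → ℝ)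
    (hy : ∀ i, y i = 0 ∨ y i = 1)
    (lam : ℝ) (hlam : 0 < lam)
    (p : Fin m' → ℝ) (hp : p = softmax z)
    (phat : ℝ) (hphat : phat = ∑ i, y i * p i)
    (h0 : 0 < phat) (h1 : phat < 1)
    (grad : Fin m' → ℝ) (hgrad : ∀ j, grad j = (p j / phat) * (phat - y j))
    (z' : Fin m' → ℝ) (hz' : ∀ j, z' j = z j - lam * grad j)
    (p' : Fin m' → ℝ) (hp' : p' = softmax z')
    (a b : Fin m') (ha : y a = 1) (hb : y b = 1) :
    p' a / p' b = (p a / p b) * Real.exp (lam * (p a - p b) * (1 - phat) / phat) ∧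
    (p a / p b < p' a / p' b ↔ p b < p a) ∧
    (p a = p b → p' a / p' b = p a / p b) :=
  nll_ratio_update_general z y lam hlam p hp phat h0 h1 grad hgrad z' hz' p' hp' a b ha hb
end

section
/- In the single-allowed-output case (k = 1 with allowed index t), the Libra loss reduces to the log-odds L(z) = log((1-p_t)/p_t) where p = softmax(z), and its derivative with respect to the allowed logit z_t is identically -1. -/
lemma one_sub_softmax {m : ℕ} (z : Fin m → ℝ) (t : Fin m) :
    1 - softmax z t = (∑ j ∈ Finset.univ.erase t, Real.exp (z j)) / ∑ k, Real.exp (z k) := by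
  have hS : (0:ℝ) < ∑ k, Real.exp (z k) :=
    Finset.sum_pos (fun i _ => Real.exp_pos _) ⟨t, Finset.mem_univ t⟩
  have h : (∑ j ∈ Finset.univ.erase t, Real.exp (z j)) + Real.exp (z t) = ∑ k, Real.exp (z k) :=
    Finset.sum_erase_add _ _ (Finset.mem_univ t)
  field_simp [softmax]
  rw [softmax, sub_mul, div_mul_cancel₀ _ hS.ne']
  linarith

/-- with a single allowed output `t`, the Libra loss reduces to the
log-odds `log((1-p_t)/p_t)`, and its derivative with respect to `z_t` is `-1`. -/
theorem libra_single_allowed {m : ℕ} (hm : 2 ≤ m) (t : Fin m)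
    (y : Fin m → ℝ) (hy : ∀ i, y i = if i = t then 1 else 0)
    (z : Fin m → ℝ) :
    (Real.log (1 - ∑ i, y i * softmax z i) - ∑ i, y i * Real.log (softmax z i)
        = Real.log ((1 - softmax z t) / softmax z t)) ∧
    HasDerivAt
      (fun s : ℝ =>
        Real.log ((1 - softmax (Function.update z t s) t)
          / softmax (Function.update z t s) t))
      (-1) (z t) := by
  have herase : ∀ w : Fin m → ℝ, (0:ℝ) < ∑ j ∈ Finset.univ.erase t, Real.exp (w j) := by
    intro w
    apply Finset.sum_pos (fun i _ => Real.exp_pos _)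
    have : (Finset.univ.erase t).Nonempty := by
      rw [← Finset.card_pos, Finset.card_erase_of_mem (Finset.mem_univ t), Finset.card_univ,
        Fintype.card_fin]
      omega
    exact this
  have hS : ∀ w : Fin m → ℝ, (0:ℝ) < ∑ k, Real.exp (w k) :=
    fun w => Finset.sum_pos (fun i _ => Real.exp_pos _) ⟨t, Finset.mem_univ t⟩
  have hpos : ∀ w : Fin m → ℝ, 0 < softmax w t :=
    fun w => div_pos (Real.exp_pos _) (hS w)
  have hone : ∀ w : Fin m → ℝ, 0 < 1 - softmax w t := by
    intro w
    rw [one_sub_softmax]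
    exact div_pos (herase w) (hS w)
  constructor
  · have h1 : ∑ i, y i * softmax z i = softmax z t := by
      simp [hy, ite_mul]
    have h2 : ∑ i, y i * Real.log (softmax z i) = Real.log (softmax z t) := by
      simp [hy, ite_mul]
    rw [h1, h2, Real.log_div (ne_of_gt (hone z)) (ne_of_gt (hpos z))]
  · have key : ∀ s : ℝ,
        Real.log ((1 - softmax (Function.update z t s) t) / softmax (Function.update z t s) t)
          = Real.log (∑ j ∈ Finset.univ.erase t, Real.exp (z j)) - s := by
      intro s
      have hupd : ∀ j ∈ Finset.univ.erase t, Real.exp (Function.update z t s j) = Real.exp (z j) := by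
        intro j hj
        rw [Function.update_of_ne (Finset.ne_of_mem_erase hj)]
      rw [Real.log_div (ne_of_gt (hone _)) (ne_of_gt (hpos _)), one_sub_softmax,
        softmax, Real.log_div (ne_of_gt (herase _)) (ne_of_gt (hS _)),
        Real.log_div (ne_of_gt (Real.exp_pos _)) (ne_of_gt (hS _)),
        Finset.sum_congr rfl hupd, Function.update_self, Real.log_exp]
      ring
    have : (fun s : ℝ =>
        Real.log ((1 - softmax (Function.update z t s) t) / softmax (Function.update z t s) t))
        = fun s : ℝ => Real.log (∑ j ∈ Finset.univ.erase t, Real.exp (z j)) - s :=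
      funext key
    rw [this]
    exact ((hasDerivAt_const (z t) _).sub (hasDerivAt_id' (z t))).congr_deriv (by norm_num)
end

section
/- Define the Sag loss L_Sag(p,y) = (1/(m-k))·Σ_i (1-y_i) log(p_i) - (1/k)·Σ_i y_i log(p_i) with p = softmax(z), k = Σ_i y_i, 1 ≤ k < m. Then ∂L_Sag/∂z_j = -1/k if y_j = 1 and ∂L_Sag/∂z_j = 1/(m-k) if y_j = 0. In particular, a gradient descent step on the logits preserves both the ratios p_i/p_j for all allowed pairs and the ratios p_i/p_j for all disallowed pairs. -/
lemma softmax_div {m : ℕ} (hm : 0 < m) (z : Fin m → ℝ) (a b : Fin m) :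
    softmax z a / softmax z b = Real.exp (z a - z b) := by
  have hS : 0 < ∑ k, Real.exp (z k) :=
    Finset.sum_pos (fun i _ => Real.exp_pos _) ⟨⟨0, hm⟩, Finset.mem_univ _⟩
  unfold softmax
  rw [Real.exp_sub]
  field_simp

/-- the logit partial derivatives of the Sag loss are `-1/k` on allowed
outputs and `1/(m-k)` on disallowed ones; consequently a gradient step preserves the
probability ratios within the allowed outputs and within the disallowed outputs. -/
theorem sag_partial_deriv_and_ratios {m : ℕ} (z : Fin m → ℝ) (y : Fin m → ℝ)
    (hy : ∀ i, y i = 0 ∨ y i = 1)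
    (k : ℕ) (hk : (k : ℝ) = ∑ i, y i) (hk1 : 1 ≤ k) (hkm : k < m) :
    (∀ j : Fin m,
      HasDerivAt
        (fun t : ℝ =>
          (1 / ((m : ℝ) - k)) *
              ∑ i, (1 - y i) * Real.log (softmax (Function.update z j t) i)
            - (1 / (k : ℝ)) * ∑ i, y i * Real.log (softmax (Function.update z j t) i))
        (if y j = 1 then -(1 / (k : ℝ)) else 1 / ((m : ℝ) - k)) (z j)) ∧
    (∀ lam : ℝ, 0 < lam →
      ∀ G : Fin m → ℝ,
        (∀ j, G j = if y j = 1 then -(1 / (k : ℝ)) else 1 / ((m : ℝ) - k)) →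
        ∀ a b : Fin m,
          ((y a = 1 ∧ y b = 1) ∨ (y a = 0 ∧ y b = 0)) →
            softmax (fun j => z j - lam * G j) a
                / softmax (fun j => z j - lam * G j) b
              = softmax z a / softmax z b) := by
  have hm : 0 < m := lt_of_le_of_lt (Nat.zero_le k) hkm
  have hk0 : (k : ℝ) ≠ 0 := by positivity -- fix below if fails
  have hmk : (m : ℝ) - k ≠ 0 := by
    have : (k : ℝ) < m := by exact_mod_cast hkm
    linarith
  constructor
  · intro j
    set C : ℝ := ∑ i ∈ Finset.univ.erase j, Real.exp (z i) with hC
    have hCnn : 0 ≤ C := Finset.sum_nonneg fun i _ => (Real.exp_pos _).le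
    have hsum : ∀ t : ℝ, ∑ i, Real.exp (Function.update z j t i) = Real.exp t + C := by
      intro t
      rw [← Finset.add_sum_erase _ _ (Finset.mem_univ j)]
      rw [Function.update_self]
      congr 1
      exact Finset.sum_congr rfl fun i hi => by
        rw [Function.update_of_ne (Finset.ne_of_mem_erase hi)]
    have hSpos : ∀ t : ℝ, 0 < Real.exp t + C := fun t => by
      have := Real.exp_pos t; linarith
    have hlogsm : ∀ t : ℝ, ∀ i, Real.log (softmax (Function.update z j t) i)
        = (if i = j then t else z i) - Real.log (Real.exp t + C) := by
      intro t i
      unfold softmax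
      rw [hsum t, Real.log_div (Real.exp_ne_zero _) (hSpos t).ne', Real.log_exp]
      congr 1
      by_cases h : i = j
      · subst h; rw [Function.update_self, if_pos rfl]
      · rw [Function.update_of_ne h, if_neg h]
    have hfun : (fun t : ℝ =>
          (1 / ((m : ℝ) - k)) *
              ∑ i, (1 - y i) * Real.log (softmax (Function.update z j t) i)
            - (1 / (k : ℝ)) * ∑ i, y i * Real.log (softmax (Function.update z j t) i))
        = (fun t : ℝ =>
          (1 / ((m : ℝ) - k)) *
              ∑ i, (1 - y i) * ((if i = j then t else z i) - Real.log (Real.exp t + C))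
            - (1 / (k : ℝ)) *
              ∑ i, y i * ((if i = j then t else z i) - Real.log (Real.exp t + C))) := by
      funext t
      simp only [hlogsm t]
    rw [hfun]
    set p : ℝ := Real.exp (z j) / (Real.exp (z j) + C) with hp
    have hlog : HasDerivAt (fun t : ℝ => Real.log (Real.exp t + C)) p (z j) :=
      ((Real.hasDerivAt_exp (z j)).add_const C).log (hSpos (z j)).ne'
    have hterm : ∀ i : Fin m, HasDerivAt
        (fun t : ℝ => (if i = j then t else z i) - Real.log (Real.exp t + C))
        ((if i = j then (1:ℝ) else 0) - p) (z j) := by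
      intro i
      by_cases h : i = j
      · simpa [h] using (hasDerivAt_id (z j)).fun_sub hlog
      · simpa [h] using (hasDerivAt_const (z j) (z i)).fun_sub hlog
    have h1 : HasDerivAt
        (fun t : ℝ => ∑ i, (1 - y i) * ((if i = j then t else z i) - Real.log (Real.exp t + C)))
        (∑ i, (1 - y i) * ((if i = j then (1:ℝ) else 0) - p)) (z j) :=
      HasDerivAt.fun_sum fun i _ => (hterm i).const_mul _
    have h2 : HasDerivAt
        (fun t : ℝ => ∑ i, y i * ((if i = j then t else z i) - Real.log (Real.exp t + C)))
        (∑ i, y i * ((if i = j then (1:ℝ) else 0) - p)) (z j) :=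
      HasDerivAt.fun_sum fun i _ => (hterm i).const_mul _
    have hD := (h1.const_mul (1 / ((m : ℝ) - k))).fun_sub (h2.const_mul (1 / (k : ℝ)))
    refine hD.congr_deriv ?_
    have hs1 : ∑ i, y i * ((if i = j then (1:ℝ) else 0) - p) = y j - k * p := by
      simp only [mul_sub, mul_ite, mul_one, mul_zero, Finset.sum_sub_distrib,
        Finset.sum_ite_eq', Finset.mem_univ, if_true, ← Finset.sum_mul, ← hk]
    have hs2 : ∑ i, (1 - y i) * ((if i = j then (1:ℝ) else 0) - p)
        = (1 - y j) - ((m : ℝ) - k) * p := by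
      have hsum1 : ∑ i : Fin m, (1 - y i) = (m : ℝ) - k := by
        rw [Finset.sum_sub_distrib, Finset.sum_const, Finset.card_univ, Fintype.card_fin,
          nsmul_eq_mul, mul_one, ← hk]
      simp only [mul_sub, mul_ite, mul_one, mul_zero, Finset.sum_sub_distrib,
        Finset.sum_ite_eq', Finset.mem_univ, if_true, ← Finset.sum_mul, hsum1]
    rw [hs1, hs2]
    rcases hy j with h | h <;> rw [h]
    · norm_num
      field_simp
      ring
    · norm_num
      field_simp
      ring
  · intro lam hlam G hG a b hab
    rw [softmax_div hm, softmax_div hm]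
    have hGab : G a = G b := by
      rw [hG a, hG b]
      rcases hab with ⟨h1, h2⟩ | ⟨h1, h2⟩ <;> norm_num [h1, h2]
    congr 1
    rw [hGab]; ring
end

section
/- Consider gradient descent on the logits z ∈ ℝ^m with the NLL loss L = -log(Σ_i y_i p_i), p = softmax(z), fixed learning rate λ > 0, applied to a single datapoint (x, y) with 1 ≤ k = Σ_i y_i < m. Let J be the set of allowed indices attaining the maximal initial probability among allowed outputs. Then the iterates converge and the limit distribution assigns probability 1/|J| to each index in J and 0 to every other index. -/
open Filter Topology

set_option maxHeartbeats 1000000 in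
/-- winner-take-all: gradient descent on the logits with the NLL loss
on a single datapoint converges to the distribution that is uniform on the set `J` of
allowed outputs of maximal initial probability and zero elsewhere. -/
theorem nll_winner_take_all {m : ℕ} (y : Fin m → ℝ)
    (hy : ∀ i, y i = 0 ∨ y i = 1)
    (k : ℕ) (hk : (k : ℝ) = ∑ i, y i) (hk1 : 1 ≤ k) (hkm : k < m)
    (lam : ℝ) (hlam : 0 < lam)
    (z : ℕ → Fin m → ℝ)
    (hupd : ∀ t j, z (t + 1) j =
      z t j - lam * (softmax (z t) j
        - y j * softmax (z t) j / ∑ i, y i * softmax (z t) i))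
    (J : Finset (Fin m))
    (hJ : ∀ j, j ∈ J ↔ (y j = 1 ∧ ∀ i, y i = 1 → softmax (z 0) i ≤ softmax (z 0) j)) :
    ∀ j : Fin m,
      Tendsto (fun t => softmax (z t) j) atTop
        (𝓝 (if j ∈ J then 1 / (J.card : ℝ) else 0)) := by
  classical
  have hm : 0 < m := lt_of_le_of_lt (Nat.zero_le k) hkm
  have hSpos : ∀ t, 0 < ∑ i, Real.exp (z t i) := fun t =>
    Finset.sum_pos (fun i _ => Real.exp_pos _) ⟨⟨0, hm⟩, Finset.mem_univ _⟩
  have hppos : ∀ t i, 0 < softmax (z t) i := fun t i =>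
    div_pos (Real.exp_pos _) (hSpos t)
  have hpsum : ∀ t, ∑ i, softmax (z t) i = 1 := by
    intro t
    simp only [softmax, ← Finset.sum_div]
    exact div_self (hSpos t).ne'
  set ph : ℕ → ℝ := fun t => ∑ i, y i * softmax (z t) i with hph
  have hy0 : ∀ i, 0 ≤ y i := fun i => by rcases hy i with h | h <;> rw [h] <;> norm_num
  have hy1 : ∀ i, y i ≤ 1 := fun i => by rcases hy i with h | h <;> rw [h] <;> norm_num
  have hphle : ∀ t, ph t ≤ 1 := by
    intro t
    rw [← hpsum t]
    refine Finset.sum_le_sum fun i _ => ?_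
    nlinarith [hppos t i, hy1 i, hy0 i]
  -- there is an allowed index
  have hex1 : ∃ a, y a = 1 := by
    by_contra h
    push_neg at h
    have h0 : ∀ i, y i = 0 := fun i => (hy i).resolve_right (h i)
    have hz0 : (k : ℝ) = 0 := by rw [hk]; simp [h0]
    have : k = 0 := by exact_mod_cast hz0
    omega
  obtain ⟨a, ha⟩ := hex1
  have hphpos : ∀ t, 0 < ph t := by
    intro t
    refine Finset.sum_pos' (fun i _ => mul_nonneg (hy0 i) (hppos t i).le)
      ⟨a, Finset.mem_univ a, ?_⟩
    rw [ha, one_mul]; exact hppos t a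
  -- there is a disallowed index
  have hex0 : ∃ b, y b = 0 := by
    by_contra h
    push_neg at h
    have h1 : ∀ i, y i = 1 := fun i => (hy i).resolve_left (h i)
    have hz0 : (k : ℝ) = m := by
      rw [hk]; simp [h1]
    have : k = m := by exact_mod_cast hz0
    omega
  obtain ⟨i0, hi0⟩ := hex0
  -- pick j0 ∈ J
  obtain ⟨j0, hj0A, hj0max⟩ :=
    Finset.exists_max_image (Finset.univ.filter fun i => y i = 1) (fun i => softmax (z 0) i)
      ⟨a, Finset.mem_filter.mpr ⟨Finset.mem_univ a, ha⟩⟩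
  have hyj0 : y j0 = 1 := (Finset.mem_filter.mp hj0A).2
  have hj0max' : ∀ i, y i = 1 → softmax (z 0) i ≤ softmax (z 0) j0 := fun i hi =>
    hj0max i (Finset.mem_filter.mpr ⟨Finset.mem_univ i, hi⟩)
  have hj0J : j0 ∈ J := (hJ j0).mpr ⟨hyj0, hj0max'⟩
  have hJ1 : ∀ j, j ∈ J → y j = 1 := fun j hj => ((hJ j).mp hj).1
  -- relative form of softmax
  have hsm : ∀ t i, softmax (z t) i
      = Real.exp (z t i - z t j0) / ∑ j, Real.exp (z t j - z t j0) := by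
    intro t i
    have he : Real.exp (z t j0) ≠ 0 := (Real.exp_pos _).ne'
    have hs : (∑ j, Real.exp (z t j - z t j0)) = (∑ j, Real.exp (z t j)) / Real.exp (z t j0) := by
      rw [Finset.sum_div]
      exact Finset.sum_congr rfl fun j _ => Real.exp_sub _ _
    unfold softmax
    rw [hs, Real.exp_sub, div_div_div_cancel_right₀ he]
  have hDpos : ∀ t, 0 < ∑ j, Real.exp (z t j - z t j0) := fun t =>
    Finset.sum_pos (fun i _ => Real.exp_pos _) ⟨⟨0, hm⟩, Finset.mem_univ _⟩
  -- logits are equal on J at all times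
  have hz0J : ∀ j ∈ J, z 0 j = z 0 j0 := by
    intro j hj
    have h1 := ((hJ j).mp hj).2 j0 hyj0
    have h2 := hj0max' j ((hJ j).mp hj).1
    have hps : softmax (z 0) j = softmax (z 0) j0 := le_antisymm h2 h1
    unfold softmax at hps
    field_simp [(hSpos 0).ne'] at hps
    exact Real.exp_injective hps
  have hzJ : ∀ t, ∀ j ∈ J, z t j = z t j0 := by
    intro t
    induction t with
    | zero => exact hz0J
    | succ t ih =>
      intro j hj
      have hzeq := ih j hj
      have hpj : softmax (z t) j = softmax (z t) j0 := by unfold softmax; rw [hzeq]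
      rw [hupd, hupd, hzeq, hpj, hJ1 j hj, hyj0]
  -- step formulas for the gaps
  have hstep1 : ∀ t i, y i = 1 →
      (z (t+1) j0 - z (t+1) i) - (z t j0 - z t i)
        = lam * ((softmax (z t) j0 - softmax (z t) i) * ((1 - ph t) / ph t)) := by
    intro t i hi
    rw [hupd, hupd, hi, hyj0]
    have hpt : (∑ i, y i * softmax (z t) i) = ph t := rfl
    rw [hpt]
    field_simp [(hphpos t).ne']
    ring
  have hstep0 : ∀ t i, y i = 0 →
      (z (t+1) j0 - z (t+1) i) - (z t j0 - z t i)
        = lam * softmax (z t) i + lam * (softmax (z t) j0 * ((1 - ph t) / ph t)) := by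
    intro t i hi
    rw [hupd, hupd, hi, hyj0]
    have hpt : (∑ i, y i * softmax (z t) i) = ph t := rfl
    rw [hpt]
    field_simp [(hphpos t).ne']
    ring
  have hqnn : ∀ t, 0 ≤ (1 - ph t) / ph t := fun t =>
    div_nonneg (by linarith [hphle t]) (hphpos t).le
  -- j0 stays maximal among allowed indices
  have hmax : ∀ t i, y i = 1 → z t i ≤ z t j0 := by
    intro t
    induction t with
    | zero =>
      intro i hi
      have h := hj0max' i hi
      unfold softmax at h
      have hE : Real.exp (z 0 i) ≤ Real.exp (z 0 j0) :=
        (div_le_div_iff_of_pos_right (hSpos 0)).mp h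
      exact Real.exp_le_exp.mp hE
    | succ t ih =>
      intro i hi
      have h1 : softmax (z t) i ≤ softmax (z t) j0 :=
        (div_le_div_iff_of_pos_right (hSpos t)).mpr (Real.exp_le_exp.mpr (ih i hi))
      have hδ := hstep1 t i hi
      nlinarith [ih i hi, mul_nonneg (sub_nonneg.mpr h1) (hqnn t), hlam.le]
  have hmaxp : ∀ t i, y i = 1 → softmax (z t) i ≤ softmax (z t) j0 := fun t i hi =>
    (div_le_div_iff_of_pos_right (hSpos t)).mpr (Real.exp_le_exp.mpr (hmax t i hi))
  -- gaps are monotone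
  have hmono : ∀ i t, z t j0 - z t i ≤ z (t+1) j0 - z (t+1) i := by
    intro i t
    rcases hy i with h0 | h1
    · have hδ := hstep0 t i h0
      nlinarith [hppos t i, mul_nonneg (hppos t j0).le (hqnn t), hlam.le]
    · have hδ := hstep1 t i h1
      nlinarith [mul_nonneg (sub_nonneg.mpr (hmaxp t i h1)) (hqnn t), hlam.le]
  have hgmono : ∀ i, Monotone fun t => z t j0 - z t i := fun i =>
    monotone_nat_of_le_succ (hmono i)
  have hg0 : ∀ t i, z 0 j0 - z 0 i ≤ z t j0 - z t i := fun t i => hgmono i (Nat.zero_le t)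
  -- lower bound on the probability of j0
  set c := softmax (z 0) j0 with hc
  have hcpos : 0 < c := hppos 0 j0
  have hDform : ∀ t, softmax (z t) j0 = (∑ j, Real.exp (z t j - z t j0))⁻¹ := by
    intro t
    rw [hsm t j0, sub_self, Real.exp_zero, one_div]
  have hcle : ∀ t, c ≤ softmax (z t) j0 := by
    intro t
    rw [hDform t, hc, hDform 0]
    refine inv_anti₀ (hDpos t) ?_
    refine Finset.sum_le_sum fun i _ => Real.exp_le_exp.mpr ?_
    have := hg0 t i; linarith
  -- probability in terms of relative gaps
  have hpr : ∀ t i, softmax (z t) i = Real.exp (z t i - z t j0) * softmax (z t) j0 := by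
    intro t i
    rw [hsm t i, hDform t, div_eq_mul_inv]
  -- p j0 ≤ ph
  have hpj0ph : ∀ t, softmax (z t) j0 ≤ ph t := by
    intro t
    have h := Finset.single_le_sum (f := fun i => y i * softmax (z t) i)
      (fun i _ => mul_nonneg (hy0 i) (hppos t i).le) (Finset.mem_univ j0)
    simp only [hyj0, one_mul] at h
    exact h
  -- disallowed probabilities are at most 1 - ph
  have h1ph : ∀ t i, y i = 0 → softmax (z t) i ≤ 1 - ph t := by
    intro t i hi
    have hsplit : 1 - ph t = ∑ j, (1 - y j) * softmax (z t) j := by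
      have h2 : ∀ j : Fin m, (1 - y j) * softmax (z t) j
          = softmax (z t) j - y j * softmax (z t) j := fun j => by ring
      simp only [h2, Finset.sum_sub_distrib, hpsum t]
      rfl
    rw [hsplit]
    have h := Finset.single_le_sum (f := fun j => (1 - y j) * softmax (z t) j)
      (fun j _ => mul_nonneg (by linarith [hy1 j]) (hppos t j).le) (Finset.mem_univ i)
    simp only [hi, sub_zero, one_mul] at h
    exact h
  -- gaps to disallowed indices tend to infinity
  have htop0 : ∀ i, y i = 0 → Tendsto (fun t => z t j0 - z t i) atTop atTop := by
    intro i hi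
    refine tendsto_atTop_atTop_of_monotone (hgmono i) ?_
    intro b
    by_contra hb
    push_neg at hb
    set δ := lam * (Real.exp (-b) * c) with hδdef
    have hδpos : 0 < δ := by positivity
    have hstep : ∀ t, z t j0 - z t i + δ ≤ z (t+1) j0 - z (t+1) i := by
      intro t
      have hδf := hstep0 t i hi
      have hplow : Real.exp (-b) * c ≤ softmax (z t) i := by
        rw [hpr t i]
        have h1 : Real.exp (-b) ≤ Real.exp (z t i - z t j0) := by
          apply Real.exp_le_exp.mpr
          have := hb t; linarith
        nlinarith [Real.exp_pos (-b), hcpos, hcle t]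
      have hnn : 0 ≤ softmax (z t) j0 * ((1 - ph t) / ph t) :=
        mul_nonneg (hppos t j0).le (hqnn t)
      nlinarith [hlam]
    have hgrow : ∀ n : ℕ, z 0 j0 - z 0 i + n * δ ≤ z n j0 - z n i := by
      intro n
      induction n with
      | zero => simp
      | succ n ih =>
        have := hstep n
        push_cast
        push_cast at ih
        linarith
    obtain ⟨n, hn⟩ := exists_nat_ge ((b - (z 0 j0 - z 0 i)) / δ)
    have h1 := hgrow n
    have hb' := hb n
    rw [div_le_iff₀ hδpos] at hn
    linarith
  -- gaps to allowed non-maximal indices tend to infinity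
  have htop1 : ∀ i, y i = 1 → i ∉ J → Tendsto (fun t => z t j0 - z t i) atTop atTop := by
    intro i hi hiJ
    have hd0 : 0 < z 0 j0 - z 0 i := by
      have hni : ¬ (y i = 1 ∧ ∀ i', y i' = 1 → softmax (z 0) i' ≤ softmax (z 0) i) :=
        fun h => hiJ ((hJ i).mpr h)
      push_neg at hni
      obtain ⟨i', hi', hlt⟩ := hni hi
      have hplt : softmax (z 0) i < softmax (z 0) j0 := lt_of_lt_of_le hlt (hj0max' i' hi')
      unfold softmax at hplt
      have hE : Real.exp (z 0 i) < Real.exp (z 0 j0) :=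
        (div_lt_div_iff_of_pos_right (hSpos 0)).mp hplt
      have := Real.exp_lt_exp.mp hE
      linarith
    set c' := c * (1 - Real.exp (-(z 0 j0 - z 0 i))) with hc'
    have hexplt : Real.exp (-(z 0 j0 - z 0 i)) < 1 := by
      rw [Real.exp_lt_one_iff]; linarith
    have hc'pos : 0 < c' := mul_pos hcpos (by linarith)
    -- the gap difference is bounded below by c' at all times
    have hpd : ∀ t, c' ≤ softmax (z t) j0 - softmax (z t) i := by
      intro t
      have h1 : Real.exp (z t i - z t j0) ≤ Real.exp (-(z 0 j0 - z 0 i)) := by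
        apply Real.exp_le_exp.mpr
        have := hg0 t i; linarith
      rw [hpr t i]
      have h2 := hcle t
      nlinarith [Real.exp_pos (z t i - z t j0), hcpos, hexplt]
    -- bounds on the step increments
    have hq1 : ∀ t, 1 - ph t ≤ (1 - ph t) / ph t := by
      intro t
      rw [le_div_iff₀ (hphpos t)]
      nlinarith [hphle t, hphpos t]
    have hq2 : ∀ t, softmax (z t) j0 * ((1 - ph t) / ph t) ≤ 1 - ph t := by
      intro t
      rw [mul_div_assoc', div_le_iff₀ (hphpos t)]
      nlinarith [hpj0ph t, hphle t, hphpos t, hppos t j0]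
    have hcomp : ∀ t, c' / 2 * ((z (t+1) j0 - z (t+1) i0) - (z t j0 - z t i0))
        ≤ (z (t+1) j0 - z (t+1) i) - (z t j0 - z t i) := by
      intro t
      have hde := hstep0 t i0 hi0
      have hdd := hstep1 t i hi
      have h3 : c' * ((1 - ph t) / ph t)
          ≤ (softmax (z t) j0 - softmax (z t) i) * ((1 - ph t) / ph t) :=
        mul_le_mul_of_nonneg_right (hpd t) (hqnn t)
      have h4 : c' * (1 - ph t) ≤ c' * ((1 - ph t) / ph t) :=
        mul_le_mul_of_nonneg_left (hq1 t) hc'pos.le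
      have h5 := h1ph t i0 hi0
      have h6 := hq2 t
      have h3' := mul_le_mul_of_nonneg_left h3 hlam.le
      have h4' := mul_le_mul_of_nonneg_left h4 hlam.le
      have hcl : 0 ≤ c' / 2 * lam := by positivity
      have h5' := mul_le_mul_of_nonneg_left h5 hcl
      have h6' := mul_le_mul_of_nonneg_left h6 hcl
      rw [hde, hdd]
      nlinarith [h3', h4', h5', h6']
    have hsumc : ∀ n : ℕ, c' / 2 * ((z n j0 - z n i0) - (z 0 j0 - z 0 i0))
        ≤ (z n j0 - z n i) - (z 0 j0 - z 0 i) := by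
      intro n
      induction n with
      | zero => simp
      | succ n ih =>
        have := hcomp n
        nlinarith
    have he := htop0 i0 hi0
    have haux : Tendsto (fun t => c' / 2 * ((z t j0 - z t i0) - (z 0 j0 - z 0 i0))
        + (z 0 j0 - z 0 i)) atTop atTop := by
      apply tendsto_atTop_add_const_right
      apply Tendsto.const_mul_atTop (by positivity : (0:ℝ) < c' / 2)
      exact tendsto_atTop_add_const_right _ _ he
    refine tendsto_atTop_mono (fun n => ?_) haux
    have := hsumc n
    linarith
  have hgtop : ∀ i, i ∉ J → Tendsto (fun t => z t j0 - z t i) atTop atTop := by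
    intro i hiJ
    rcases hy i with h | h
    · exact htop0 i h
    · exact htop1 i h hiJ
  -- limits of the relative exponentials
  have hrlim : ∀ i, Tendsto (fun t => Real.exp (z t i - z t j0)) atTop
      (𝓝 (if i ∈ J then (1:ℝ) else 0)) := by
    intro i
    by_cases hiJ : i ∈ J
    · simp only [hiJ, if_true]
      have hconst : ∀ t, Real.exp (z t i - z t j0) = 1 := fun t => by
        rw [hzJ t i hiJ, sub_self, Real.exp_zero]
      simp only [hconst]
      exact tendsto_const_nhds
    · simp only [hiJ, if_false]
      have h1 : Tendsto (fun t => z t i - z t j0) atTop atBot := by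
        have h2 := tendsto_neg_atTop_atBot.comp (hgtop i hiJ)
        refine h2.congr fun t => by simp [neg_sub]
      exact Real.tendsto_exp_atBot.comp h1
  have hcardeq : ∑ i : Fin m, (if i ∈ J then (1:ℝ) else 0) = J.card := by
    simp
  have hDlim : Tendsto (fun t => ∑ j, Real.exp (z t j - z t j0)) atTop (𝓝 (J.card : ℝ)) := by
    rw [← hcardeq]
    exact tendsto_finset_sum _ fun i _ => hrlim i
  intro j
  have hcard : (0:ℝ) < J.card := by
    have : 0 < J.card := Finset.card_pos.mpr ⟨j0, hj0J⟩
    exact_mod_cast this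
  have hfin := (hrlim j).div hDlim hcard.ne'
  have hiff : (if j ∈ J then (1:ℝ) else 0) / (J.card : ℝ)
      = if j ∈ J then 1 / (J.card : ℝ) else 0 := by
    split <;> simp
  rw [← hiff]
  exact Tendsto.congr (fun t => (hsm t j).symm) hfin
end
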